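/- arXiv:math/0703614 — 2 statements merged into one kernel-verified Lean document; each statement's English description precedes it below -/
import Mathlib

section
/- For any finite nonempty subsets X, B₁, ..., B_k of an abelian group, |B₁ + ⋯ + B_k| ≤ (|X + B₁| ⋯ |X + B_k|) / |X|^(k-1). -/
open Finset Fintype Pointwise

lemma arith' (S c P x : ℚ≥0) (n : ℕ) (hx : 0 < x)
    (h1 : S ^ (n+1) ≤ (c / x ^ (n+1)) ^ (n+1) * x ^ (n+1)) (h2 : c ≤ P) :
    S * x ^ n ≤ P := by
  have key : (S * x ^ n) ^ (n+1) ≤ P ^ (n+1) := by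
    calc (S * x ^ n) ^ (n+1) = S ^ (n+1) * (x ^ (n+1)) ^ n := by ring
      _ ≤ ((c / x ^ (n+1)) ^ (n+1) * x ^ (n+1)) * (x ^ (n+1)) ^ n := by gcongr
      _ = c ^ (n+1) := by
          rw [div_pow, div_mul_eq_mul_div, div_mul_eq_mul_div,
            div_eq_iff (by positivity : (x ^ (n+1)) ^ (n+1) ≠ 0)]
          ring
      _ ≤ P ^ (n+1) := by gcongr
  exact le_of_pow_le_pow_left₀ (Nat.succ_ne_zero n) zero_le key

lemma piFinset_sum' {ι G : Type*} [Fintype ι] [DecidableEq ι] [DecidableEq G] [AddCommMonoid G]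
    {κ : Type*} (s : Finset κ) (f : κ → ι → Finset G) :
    (piFinset fun i => ∑ j ∈ s, f j i) = ∑ j ∈ s, piFinset (f j) := by
  classical
  induction s using Finset.induction_on with
  | empty => ext g; simp [Finset.mem_zero, funext_iff]
  | insert _ _ h ih => simp [Finset.sum_insert h, Fintype.piFinset_add, ih]

lemma sum_subset_sum' {G : Type*} [DecidableEq G] [AddCommMonoid G] {κ : Type*} (s : Finset κ)
    (f g : κ → Finset G) (h : ∀ j ∈ s, f j ⊆ g j) : ∑ j ∈ s, f j ⊆ ∑ j ∈ s, g j := by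
  classical
  induction s using Finset.induction_on with
  | empty => simp
  | insert _ _ hx ih =>
    rw [Finset.sum_insert hx, Finset.sum_insert hx]
    exact Finset.add_subset_add (h _ (Finset.mem_insert_self _ _))
      (ih fun j hj => h j (Finset.mem_insert_of_mem hj))

lemma shiftA {H : Type*} [AddCommGroup H] [DecidableEq H] (n : ℕ) (X : Finset H)
    (B : Fin (n+1) → Finset H) (hX : X.Nonempty) :
    (∑ i, B i).card * X.card ^ n ≤ (n+1) * ∏ i, (X + B i).card := by
  classical
  set T : Fin (n+1) → Finset (Fin (n+1) → H) := fun j => piFinset (fun i => B (i + j)) with hT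
  set B' : Finset (Fin (n+1) → H) := Finset.univ.biUnion T with hB'
  set A' : Finset (Fin (n+1) → H) := piFinset (fun _ => X) with hA'
  have hA'ne : A'.Nonempty := by
    rw [hA', Fintype.piFinset_nonempty]; exact fun _ => hX
  have hrow : ∀ i : Fin (n+1), ∑ j, B (i + j) = ∑ j, B j := fun i =>
    Fintype.sum_equiv (Equiv.addLeft i) _ _ (fun j => rfl)
  have hsumT : (∑ j, T j) = piFinset (fun _ => ∑ i, B i) := by
    rw [hT, ← piFinset_sum' Finset.univ (fun j i => B (i + j))]
    exact congrArg _ (funext hrow)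
  have hsub : (∑ j, T j) ⊆ (n+1) • B' := by
    have h2 : ((n+1) • B' : Finset (Fin (n+1) → H)) = ∑ _j : Fin (n+1), B' := by
      rw [Finset.sum_const, Finset.card_univ, Fintype.card_fin]
    rw [h2]
    exact sum_subset_sum' _ _ _ (fun j _ => Finset.subset_biUnion_of_mem T (Finset.mem_univ j))
  have hcard1 : (∑ i, B i).card ^ (n+1) ≤ ((n+1) • B').card := by
    calc (∑ i, B i).card ^ (n+1) = (∑ j, T j).card := by
          rw [hsumT, Fintype.card_piFinset, Finset.prod_const, Finset.card_univ,
            Fintype.card_fin]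
      _ ≤ ((n+1) • B').card := Finset.card_le_card hsub
  have hAB' : (A' + B').card ≤ (n+1) * ∏ i, (X + B i).card := by
    have hsub2 : A' + B' ⊆ Finset.univ.biUnion (fun j => A' + T j) := by
      intro x hx
      rw [Finset.mem_add] at hx
      obtain ⟨a, ha, b, hb, rfl⟩ := hx
      rw [hB', Finset.mem_biUnion] at hb
      obtain ⟨j, _, hbj⟩ := hb
      exact Finset.mem_biUnion.2 ⟨j, Finset.mem_univ j,
        Finset.mem_add.2 ⟨a, ha, b, hbj, rfl⟩⟩
    calc (A' + B').card ≤ ∑ j, (A' + T j).card :=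
          (Finset.card_le_card hsub2).trans Finset.card_biUnion_le
      _ = ∑ _j : Fin (n+1), ∏ i, (X + B i).card := by
          refine Finset.sum_congr rfl fun j _ => ?_
          rw [hA', hT, ← Fintype.piFinset_add, Fintype.card_piFinset]
          exact Fintype.prod_equiv (Equiv.addRight j) _ _ (fun i => rfl)
      _ = (n+1) * ∏ i, (X + B i).card := by
          rw [Finset.sum_const, Finset.card_univ, Fintype.card_fin, smul_eq_mul]
  -- Now combine over ℚ≥0
  have hx : (0 : ℚ≥0) < (X.card : ℚ≥0) := by exact_mod_cast hX.card_pos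
  have hA'card : (A'.card : ℚ≥0) = (X.card : ℚ≥0) ^ (n+1) := by
    rw [hA', Fintype.card_piFinset, Finset.prod_const, Finset.card_univ, Fintype.card_fin]
    push_cast; rfl
  have hPR := Finset.pluennecke_ruzsa_inequality_nsmul_add hA'ne B' (n+1)
  rw [hA'card] at hPR
  have h1 : ((∑ i, B i).card : ℚ≥0) ^ (n+1) ≤
      (((A' + B').card : ℚ≥0) / (X.card : ℚ≥0) ^ (n+1)) ^ (n+1) * (X.card : ℚ≥0) ^ (n+1) := by
    refine le_trans ?_ hPR
    exact_mod_cast hcard1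
  have h2 : ((A' + B').card : ℚ≥0) ≤ ((n+1 : ℕ) : ℚ≥0) * ((∏ i, (X + B i).card : ℕ) : ℚ≥0) := by
    exact_mod_cast hAB'
  have hfin : ((∑ i, B i).card : ℚ≥0) * (X.card : ℚ≥0) ^ n ≤
      ((n+1 : ℕ) : ℚ≥0) * ((∏ i, (X + B i).card : ℕ) : ℚ≥0) :=
    arith' _ _ _ _ n hx h1 h2
  exact_mod_cast hfin

lemma nat_le_of_forall_pow (a b K : ℕ) (h : ∀ m, a ^ m ≤ K * b ^ m) : a ≤ b := by
  by_contra hab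
  push_neg at hab
  rcases Nat.eq_zero_or_pos b with rfl | hb
  · have := h 1
    simp at this
    omega
  · have hbR : (0:ℝ) < (b:ℝ) := by exact_mod_cast hb
    have h1 : ((a:ℝ)/(b:ℝ)) ^ (K * b) ≤ (K : ℝ) := by
      rw [div_pow, div_le_iff₀ (by positivity)]
      exact_mod_cast h (K * b)
    have hbase : (1 + 1/(b:ℝ)) ≤ (a:ℝ)/(b:ℝ) := by
      have hba : (b:ℝ) + 1 ≤ (a:ℝ) := by exact_mod_cast hab
      rw [show 1 + 1/(b:ℝ) = ((b:ℝ)+1)/(b:ℝ) by field_simp]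
      gcongr
    have h2 : (1 + 1/(b:ℝ)) ^ (K * b) ≤ ((a:ℝ)/(b:ℝ)) ^ (K * b) :=
      pow_le_pow_left₀ (by positivity) hbase _
    have hdiv : (0:ℝ) ≤ 1/(b:ℝ) := by positivity
    have h3 : 1 + ((K * b : ℕ):ℝ) * (1/(b:ℝ)) ≤ (1 + 1/(b:ℝ)) ^ (K * b) := by
      have := one_add_mul_le_pow (a := 1/(b:ℝ)) (by linarith) (K * b)
      linarith [this]
    have h4 : ((K * b : ℕ):ℝ) * (1/(b:ℝ)) = (K:ℝ) := by
      push_cast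
      field_simp
    rw [h4] at h3
    linarith

lemma tensor_step {G : Type*} [AddCommGroup G] [DecidableEq G] (n : ℕ) (X : Finset G)
    (B : Fin (n+1) → Finset G) (hX : X.Nonempty) (m : ℕ) :
    ((∑ i, B i).card * X.card ^ n) ^ m ≤ (n+1) * (∏ i, (X + B i).card) ^ m := by
  classical
  set Xm : Finset (Fin m → G) := piFinset (fun _ => X) with hXm
  set Bm : Fin (n+1) → Finset (Fin m → G) := fun i => piFinset (fun _ => B i) with hBm
  have hXmne : Xm.Nonempty := by
    rw [hXm, Fintype.piFinset_nonempty]; exact fun _ => hX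
  have key := shiftA n Xm Bm hXmne
  have e1 : (∑ i, Bm i).card = (∑ i, B i).card ^ m := by
    rw [hBm, ← piFinset_sum' Finset.univ (fun i (_ : Fin m) => B i), Fintype.card_piFinset,
      Finset.prod_const, Finset.card_univ, Fintype.card_fin]
  have e2 : Xm.card = X.card ^ m := by
    rw [hXm, Fintype.card_piFinset, Finset.prod_const, Finset.card_univ, Fintype.card_fin]
  have e3 : ∀ i, (Xm + Bm i).card = (X + B i).card ^ m := by
    intro i
    rw [hXm, hBm, ← Fintype.piFinset_add, Fintype.card_piFinset, Finset.prod_const,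
      Finset.card_univ, Fintype.card_fin]
  rw [e1, e2] at key
  simp only [e3] at key
  calc ((∑ i, B i).card * X.card ^ n) ^ m
      = (∑ i, B i).card ^ m * (X.card ^ m) ^ n := by ring
    _ ≤ (n+1) * ∏ i, (X + B i).card ^ m := key
    _ = (n+1) * (∏ i, (X + B i).card) ^ m := by rw [Finset.prod_pow]

theorem plunnecke_ruzsa_corollary {G : Type*} [AddCommGroup G] [DecidableEq G]
    (k : ℕ) (X : Finset G) (B : Fin k → Finset G)
    (hX : X.Nonempty) (hB : ∀ i, (B i).Nonempty) :
    ((∑ i, B i).card : ℝ) ≤ (∏ i, ((X + B i).card : ℝ)) / (X.card : ℝ) ^ (k - 1) := by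
  rcases k with _ | n
  · simp
  have hnat : (∑ i, B i).card * X.card ^ n ≤ ∏ i, (X + B i).card :=
    nat_le_of_forall_pow _ _ (n+1) (tensor_step n X B hX)
  have hxpos : (0:ℝ) < (X.card : ℝ) ^ n := by
    have := hX.card_pos
    positivity
  rw [Nat.succ_sub_one, le_div_iff₀ hxpos]
  calc ((∑ i, B i).card : ℝ) * (X.card : ℝ) ^ n
      = (((∑ i, B i).card * X.card ^ n : ℕ) : ℝ) := by push_cast; ring
    _ ≤ ((∏ i, (X + B i).card : ℕ) : ℝ) := by exact_mod_cast hnat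
    _ = ∏ i, ((X + B i).card : ℝ) := by push_cast; ring
end

section
/- Let A ⊆ F_p with 2 ≤ |A| < p^{1/2}. Suppose there exist A₁ ⊆ A, b₀ ∈ A, and N ≥ 1 with |b₀A ∩ aA| ≥ N for all a ∈ A₁, and suppose (A₁-A₁)/(A₁-A₁) = F_p. Then |A₁|² N⁴ |A|³ ≤ C · |A+A|⁸ for an absolute constant C. -/
open Finset Pointwise

private lemma card_smul₀ {p : ℕ} [Fact p.Prime] {a : ZMod p} (ha : a ≠ 0)
    (s : Finset (ZMod p)) : (a • s).card = s.card :=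
  Finset.card_smul_finset (Units.mk0 a ha) s

private lemma smul_add' {p : ℕ} [Fact p.Prime] (a : ZMod p) (s t : Finset (ZMod p)) :
    a • (s + t) = a • s + a • t := by
  ext u
  constructor
  · intro hu
    rw [Finset.mem_smul_finset] at hu
    obtain ⟨v, hv, rfl⟩ := hu
    rw [Finset.mem_add] at hv
    obtain ⟨b, hb, c, hc, rfl⟩ := hv
    rw [Finset.mem_add]
    exact ⟨a • b, Finset.smul_mem_smul_finset hb, a • c, Finset.smul_mem_smul_finset hc,
      (smul_add a b c).symm⟩
  · intro hu
    rw [Finset.mem_add] at hu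
    obtain ⟨v, hv, w, hw, rfl⟩ := hu
    rw [Finset.mem_smul_finset] at hv hw
    obtain ⟨b, hb, rfl⟩ := hv
    obtain ⟨c, hc, rfl⟩ := hw
    rw [← smul_add]
    exact Finset.smul_mem_smul_finset (Finset.add_mem_add hb hc)

private lemma smul_sub' {p : ℕ} [Fact p.Prime] (a : ZMod p) (s t : Finset (ZMod p)) :
    a • (s - t) = a • s - a • t := by
  ext u
  constructor
  · intro hu
    rw [Finset.mem_smul_finset] at hu
    obtain ⟨v, hv, rfl⟩ := hu
    rw [Finset.mem_sub] at hv
    obtain ⟨b, hb, c, hc, rfl⟩ := hv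
    rw [Finset.mem_sub]
    exact ⟨a • b, Finset.smul_mem_smul_finset hb, a • c, Finset.smul_mem_smul_finset hc,
      (smul_sub a b c).symm⟩
  · intro hu
    rw [Finset.mem_sub] at hu
    obtain ⟨v, hv, w, hw, rfl⟩ := hu
    rw [Finset.mem_smul_finset] at hv hw
    obtain ⟨b, hb, rfl⟩ := hv
    obtain ⟨c, hc, rfl⟩ := hw
    rw [← smul_sub]
    exact Finset.smul_mem_smul_finset (Finset.sub_mem_sub hb hc)

/-- Glibichuk–Konyagin type lemma: if the quotient set of `B` is everything and
`|B|² < p`, then some `(z-w)B + (x-y)B` has at least `|B|²/2` elements. -/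
private lemma gk_aux {p : ℕ} [Fact p.Prime] (B : Finset (ZMod p)) (hB : B.card ^ 2 < p)
    (hq : {r : ZMod p | ∃ x ∈ B, ∃ y ∈ B, ∃ z ∈ B, ∃ w ∈ B, z ≠ w ∧ r = (x - y) / (z - w)}
      = Set.univ) :
    ∃ x ∈ B, ∃ y ∈ B, ∃ z ∈ B, ∃ w ∈ B, z ≠ w ∧
      B.card ^ 2 ≤ 2 * ((z - w) • B + (x - y) • B).card := by
  have hp2 : 2 ≤ p := (Fact.out : p.Prime).two_le
  have hBne : B.Nonempty := by
    have h0 : (0 : ZMod p) ∈ {r : ZMod p | ∃ x ∈ B, ∃ y ∈ B, ∃ z ∈ B, ∃ w ∈ B,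
        z ≠ w ∧ r = (x - y) / (z - w)} := by rw [hq]; trivial
    obtain ⟨x, hx, -⟩ := h0
    exact ⟨x, hx⟩
  have hBpos : 0 < B.card := hBne.card_pos
  have hBle : B.card ^ 2 ≤ p - 1 := by omega
  set S := (B ×ˢ B) ×ˢ B ×ˢ B with hS
  set T : Finset (ZMod p) := Finset.univ.erase 0 with hT
  have hTcard : T.card = p - 1 := by
    rw [hT, Finset.card_erase_of_mem (Finset.mem_univ _), Finset.card_univ, ZMod.card]
  have hTne : T.Nonempty := ⟨1, Finset.mem_erase.2 ⟨one_ne_zero, Finset.mem_univ _⟩⟩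
  set F : ZMod p → ℕ :=
    fun ξ => (S.filter fun q => q.1.1 + ξ * q.2.1 = q.1.2 + ξ * q.2.2).card with hF
  -- double counting
  have hsum : ∑ ξ ∈ T, F ξ ≤ ∑ ξ ∈ T, 2 * B.card ^ 2 := by
    have h1 : ∑ ξ ∈ T, F ξ
        = ∑ q ∈ S, (T.filter fun ξ => q.1.1 + ξ * q.2.1 = q.1.2 + ξ * q.2.2).card := by
      simp_rw [hF, Finset.card_filter]
      exact Finset.sum_comm
    rw [h1]
    have hsplit := Finset.sum_filter_add_sum_filter_not S
      (fun q => q.1.1 = q.1.2 ∧ q.2.1 = q.2.2)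
      (fun q => (T.filter fun ξ => q.1.1 + ξ * q.2.1 = q.1.2 + ξ * q.2.2).card)
    rw [← hsplit]
    have hdiagcard : (S.filter fun q => q.1.1 = q.1.2 ∧ q.2.1 = q.2.2).card
        ≤ B.card * B.card := by
      rw [← Finset.card_product B B]
      apply Finset.card_le_card_of_injOn (fun q => (q.1.1, q.2.1))
      · rintro ⟨⟨a₁, a₂⟩, x₁, x₂⟩ hmem
        rw [Finset.mem_coe, Finset.mem_filter] at hmem
        have := hmem.1
        rw [hS] at this
        simp only [Finset.mem_product] at this
        simp only [Finset.mem_coe, Finset.mem_product]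
        exact ⟨this.1.1, this.2.1⟩
      · rintro ⟨⟨a₁, a₂⟩, x₁, x₂⟩ hmem ⟨⟨b₁, b₂⟩, y₁, y₂⟩ hmem' heq
        simp only [Finset.coe_filter, Set.mem_setOf_eq] at hmem hmem'
        obtain ⟨-, h1, h2⟩ := hmem
        obtain ⟨-, h1', h2'⟩ := hmem'
        simp only [Prod.mk.injEq] at heq ⊢
        refine ⟨⟨heq.1, ?_⟩, heq.2, ?_⟩
        · rw [← h1, ← h1', heq.1]
        · rw [← h2, ← h2', heq.2]
    have hbound1 : ∑ q ∈ S.filter (fun q => q.1.1 = q.1.2 ∧ q.2.1 = q.2.2),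
        (T.filter fun ξ => q.1.1 + ξ * q.2.1 = q.1.2 + ξ * q.2.2).card
        ≤ B.card * B.card * (p - 1) := by
      calc ∑ q ∈ S.filter (fun q => q.1.1 = q.1.2 ∧ q.2.1 = q.2.2),
            (T.filter fun ξ => q.1.1 + ξ * q.2.1 = q.1.2 + ξ * q.2.2).card
          ≤ ∑ _q ∈ S.filter (fun q => q.1.1 = q.1.2 ∧ q.2.1 = q.2.2), (p - 1) := by
            apply Finset.sum_le_sum
            intro q _
            exact (Finset.card_filter_le _ _).trans_eq hTcard
        _ = (S.filter (fun q => q.1.1 = q.1.2 ∧ q.2.1 = q.2.2)).card * (p - 1) := by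
            rw [Finset.sum_const, smul_eq_mul]
        _ ≤ B.card * B.card * (p - 1) := Nat.mul_le_mul_right _ hdiagcard
    have hbound2 : ∑ q ∈ S.filter (fun q => ¬(q.1.1 = q.1.2 ∧ q.2.1 = q.2.2)),
        (T.filter fun ξ => q.1.1 + ξ * q.2.1 = q.1.2 + ξ * q.2.2).card
        ≤ B.card * B.card * (B.card * B.card) := by
      calc ∑ q ∈ S.filter (fun q => ¬(q.1.1 = q.1.2 ∧ q.2.1 = q.2.2)),
            (T.filter fun ξ => q.1.1 + ξ * q.2.1 = q.1.2 + ξ * q.2.2).card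
          ≤ ∑ _q ∈ S.filter (fun q => ¬(q.1.1 = q.1.2 ∧ q.2.1 = q.2.2)), 1 := by
            apply Finset.sum_le_sum
            rintro ⟨⟨a₁, a₂⟩, x₁, x₂⟩ hmem
            rw [Finset.mem_filter] at hmem
            apply Finset.card_le_one.2
            intro ξ hξ ξ' hξ'
            rw [Finset.mem_filter] at hξ hξ'
            have e1 := hξ.2
            have e2 := hξ'.2
            simp only at e1 e2
            by_cases hx : x₁ = x₂
            · exfalso
              apply hmem.2
              subst hx
              exact ⟨by exact add_right_cancel e1, rfl⟩
            · have key : ξ * (x₁ - x₂) = ξ' * (x₁ - x₂) := by ring_nf; linear_combination e1 - e2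
              exact mul_right_cancel₀ (sub_ne_zero.2 hx) key
        _ = (S.filter (fun q => ¬(q.1.1 = q.1.2 ∧ q.2.1 = q.2.2))).card := by
            rw [Finset.sum_const, smul_eq_mul, mul_one]
        _ ≤ S.card := Finset.card_filter_le _ _
        _ = B.card * B.card * (B.card * B.card) := by
            simp [hS]
    calc ∑ q ∈ S.filter (fun q => q.1.1 = q.1.2 ∧ q.2.1 = q.2.2),
          (T.filter fun ξ => q.1.1 + ξ * q.2.1 = q.1.2 + ξ * q.2.2).card
        + ∑ q ∈ S.filter (fun q => ¬(q.1.1 = q.1.2 ∧ q.2.1 = q.2.2)),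
          (T.filter fun ξ => q.1.1 + ξ * q.2.1 = q.1.2 + ξ * q.2.2).card
        ≤ B.card * B.card * (p - 1) + B.card * B.card * (B.card * B.card) :=
          Nat.add_le_add hbound1 hbound2
      _ ≤ B.card * B.card * (p - 1) + B.card * B.card * (p - 1) := by
          apply Nat.add_le_add_left
          apply Nat.mul_le_mul_left
          calc B.card * B.card = B.card ^ 2 := (pow_two B.card).symm
            _ ≤ p - 1 := hBle
      _ = (p - 1) * (2 * B.card ^ 2) := by rw [pow_two]; ring
      _ = ∑ _ξ ∈ T, 2 * B.card ^ 2 := by rw [Finset.sum_const, smul_eq_mul, hTcard]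
  obtain ⟨ξ, hξT, hFξ⟩ := Finset.exists_le_of_sum_le hTne hsum
  have hξ0 : ξ ≠ 0 := (Finset.mem_erase.1 hξT).1
  -- the energy of B and ξ • B equals F ξ
  have hE : B.addEnergy (ξ • B) = F ξ := by
    show (((B ×ˢ B) ×ˢ (ξ • B) ×ˢ (ξ • B)).filter
      fun q : (ZMod p × ZMod p) × ZMod p × ZMod p => q.1.1 + q.2.1 = q.1.2 + q.2.2).card = F ξ
    rw [hF]
    refine Finset.card_bij' (fun q _ => ((q.1.1, q.1.2), (ξ⁻¹ * q.2.1, ξ⁻¹ * q.2.2)))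
      (fun q _ => ((q.1.1, q.1.2), (ξ * q.2.1, ξ * q.2.2))) ?hi ?hj ?left ?right
    case hi =>
      rintro ⟨⟨a₁, a₂⟩, c₁, c₂⟩ hmem
      rw [Finset.mem_filter] at hmem ⊢
      obtain ⟨hmem, heq⟩ := hmem
      simp only [Finset.mem_product] at hmem
      obtain ⟨⟨ha₁, ha₂⟩, hc₁, hc₂⟩ := hmem
      rw [Finset.mem_smul_finset] at hc₁ hc₂
      obtain ⟨u₁, hu₁, hu₁'⟩ := hc₁
      obtain ⟨u₂, hu₂, hu₂'⟩ := hc₂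
      constructor
      · rw [hS]
        simp only [Finset.mem_product]
        refine ⟨⟨ha₁, ha₂⟩, ?_, ?_⟩
        · rw [← hu₁']; simpa [smul_eq_mul, inv_mul_cancel_left₀ hξ0] using hu₁
        · rw [← hu₂']; simpa [smul_eq_mul, inv_mul_cancel_left₀ hξ0] using hu₂
      · simp only
        rw [mul_inv_cancel_left₀ hξ0, mul_inv_cancel_left₀ hξ0]
        exact heq
    case hj =>
      rintro ⟨⟨a₁, a₂⟩, x₁, x₂⟩ hmem
      rw [Finset.mem_filter] at hmem ⊢
      obtain ⟨hmem, heq⟩ := hmem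
      rw [hS] at hmem
      simp only [Finset.mem_product] at hmem
      obtain ⟨⟨ha₁, ha₂⟩, hx₁, hx₂⟩ := hmem
      constructor
      · simp only [Finset.mem_product]
        exact ⟨⟨ha₁, ha₂⟩, by simpa [smul_eq_mul] using Finset.smul_mem_smul_finset (a := ξ) hx₁,
          by simpa [smul_eq_mul] using Finset.smul_mem_smul_finset (a := ξ) hx₂⟩
      · exact heq
    case left =>
      rintro ⟨⟨a₁, a₂⟩, c₁, c₂⟩ _
      simp [mul_inv_cancel_left₀ hξ0]
    case right =>
      rintro ⟨⟨a₁, a₂⟩, x₁, x₂⟩ _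
      simp [inv_mul_cancel_left₀ hξ0]
  -- Cauchy–Schwarz
  have hCS : B.card ^ 2 * B.card ^ 2 ≤ (B + ξ • B).card * F ξ := by
    have h := Finset.le_card_add_mul_addEnergy B (ξ • B)
    rwa [card_smul₀ hξ0, hE] at h
  have key : B.card ^ 2 ≤ 2 * (B + ξ • B).card := by
    have h1 : B.card ^ 2 * B.card ^ 2 ≤ (2 * (B + ξ • B).card) * B.card ^ 2 := by
      calc B.card ^ 2 * B.card ^ 2 ≤ (B + ξ • B).card * F ξ := hCS
        _ ≤ (B + ξ • B).card * (2 * B.card ^ 2) := Nat.mul_le_mul_left _ hFξ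
        _ = (2 * (B + ξ • B).card) * B.card ^ 2 := by ring
    exact Nat.le_of_mul_le_mul_right h1 (pow_pos hBpos 2)
  -- representation of ξ as a quotient
  have hξmem : ξ ∈ {r : ZMod p | ∃ x ∈ B, ∃ y ∈ B, ∃ z ∈ B, ∃ w ∈ B,
      z ≠ w ∧ r = (x - y) / (z - w)} := by rw [hq]; trivial
  obtain ⟨x, hx, y, hy, z, hz, w, hw, hzw, hξeq⟩ := hξmem
  have hzw0 : z - w ≠ 0 := sub_ne_zero.2 hzw
  refine ⟨x, hx, y, hy, z, hz, w, hw, hzw, ?_⟩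
  have e1 : (z - w) • (B + ξ • B) = (z - w) • B + (x - y) • B := by
    rw [smul_add', smul_smul]
    congr 2
    rw [hξeq]
    field_simp
  calc B.card ^ 2 ≤ 2 * (B + ξ • B).card := key
    _ = 2 * ((z - w) • (B + ξ • B)).card := by rw [card_smul₀ hzw0]
    _ = 2 * ((z - w) • B + (x - y) • B).card := by rw [e1]

theorem garaev_first_case :
    ∃ C : ℝ, 0 < C ∧
      ∀ (p : ℕ) [Fact p.Prime], ∀ (A A₁ : Finset (ZMod p)) (b₀ : ZMod p) (N : ℕ),
        2 ≤ A.card → A.card ^ 2 < p → (0 : ZMod p) ∉ A →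
        A₁ ⊆ A → b₀ ∈ A → 1 ≤ N →
        (∀ a ∈ A₁, N ≤ (b₀ • A ∩ a • A).card) →
        {r : ZMod p | ∃ x ∈ A₁, ∃ y ∈ A₁, ∃ z ∈ A₁, ∃ w ∈ A₁,
          z ≠ w ∧ r = (x - y) / (z - w)} = Set.univ →
        (A₁.card : ℝ) ^ 2 * (N : ℝ) ^ 4 * (A.card : ℝ) ^ 3 ≤ C * (A + A).card ^ 8 := by
  refine ⟨2, by norm_num, ?_⟩
  intro p _ A A₁ b₀ N hA2 hAp hA0 hsub hb₀A hN hint hquot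
  have hAne : A.Nonempty := Finset.card_pos.1 (by omega)
  have hne0 : ∀ a ∈ A, a ≠ 0 := fun a ha h => hA0 (h ▸ ha)
  have hb0 : b₀ ≠ 0 := hne0 b₀ hb₀A
  set b : Finset (ZMod p) := b₀ • A with hb
  set P : ℕ := (A + A).card with hP
  -- the replacement step
  have step : ∀ a ∈ A₁, ∀ C : Finset (ZMod p),
      N * (a • A - C).card ≤ P * ((C + b)).card := by
    intro a ha C
    have ha0 : a ≠ 0 := hne0 a (hsub ha)
    set X : Finset (ZMod p) := b₀ • A ∩ a • A with hX
    have hXN : N ≤ X.card := hint a ha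
    have hR := Finset.ruzsa_triangle_inequality_sub_add_add (a • A) X C
    -- #(a•A - C) * #X ≤ #(a•A + X) * #(C + X)
    have h1 : (a • A + X).card ≤ P := by
      calc (a • A + X).card ≤ (a • A + a • A).card :=
            Finset.card_le_card (Finset.add_subset_add_left Finset.inter_subset_right)
        _ = (a • (A + A)).card := by rw [smul_add']
        _ = P := card_smul₀ ha0 _
    have h2 : (C + X).card ≤ (C + b).card :=
      Finset.card_le_card (Finset.add_subset_add_left Finset.inter_subset_left)
    calc N * (a • A - C).card ≤ X.card * (a • A - C).card := Nat.mul_le_mul_right _ hXN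
      _ = (a • A - C).card * X.card := Nat.mul_comm _ _
      _ ≤ (a • A + X).card * (C + X).card := hR
      _ ≤ P * (C + b).card := Nat.mul_le_mul h1 h2
  -- Glibichuk–Konyagin step
  have hA₁p : A₁.card ^ 2 < p :=
    lt_of_le_of_lt (Nat.pow_le_pow_left (Finset.card_le_card hsub) 2) hAp
  obtain ⟨x, hx, y, hy, z, hz, w, hw, hzw, hGK⟩ := gk_aux A₁ hA₁p hquot
  -- containment
  have hcont : (z - w) • A₁ + (x - y) • A₁ ⊆ (z • A - w • A) + (x • A - y • A) := by
    have haux : ∀ c d : ZMod p, (c - d) • A₁ ⊆ c • A - d • A := by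
      intro c d t ht
      rw [Finset.mem_smul_finset] at ht
      obtain ⟨s, hs, rfl⟩ := ht
      rw [Finset.mem_sub]
      exact ⟨c • s, Finset.smul_mem_smul_finset (hsub hs),
        d • s, Finset.smul_mem_smul_finset (hsub hs), (sub_smul c d s).symm⟩
    exact Finset.add_subset_add (haux z w) (haux x y)
  have e0 : (z • A - w • A) + (x • A - y • A) = z • A - (w • A - x • A + y • A) := by
    simp only [sub_eq_add_neg, neg_add, neg_neg]; ac_rfl
  have i2 : (w • A - x • A + y • A) + b = w • A - (x • A - y • A - b) := by
    simp only [sub_eq_add_neg, neg_add, neg_neg]; ac_rfl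
  have i3 : (x • A - y • A - b) + b = x • A - (y • A + b - b) := by
    simp only [sub_eq_add_neg, neg_add, neg_neg]; ac_rfl
  have i4 : (y • A + b - b) + b = y • A - (b - b - b) := by
    simp only [sub_eq_add_neg, neg_add, neg_neg]; ac_rfl
  have i5 : (b - b - b) + b = b₀ • (A + A - A - A) := by
    have : b₀ • (A + A - A - A) = b + b - b - b := by
      rw [smul_sub', smul_sub', smul_add']
    rw [this]
    simp only [sub_eq_add_neg, neg_add, neg_neg]; ac_rfl
  -- the chain
  have c1 := step z hz (w • A - x • A + y • A)
  have c2 := step w hw (x • A - y • A - b)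
  have c3 := step x hx (y • A + b - b)
  have c4 := step y hy (b - b - b)
  rw [i2] at c1
  rw [i3] at c2
  rw [i4] at c3
  rw [i5] at c4
  have hQcard : (b₀ • (A + A - A - A)).card = (A + A - A - A).card := card_smul₀ hb0 _
  rw [hQcard] at c4
  set Q : ℕ := (A + A - A - A).card with hQ
  have main : N ^ 4 * (z • A - (w • A - x • A + y • A)).card ≤ P ^ 4 * Q := by
    calc N ^ 4 * (z • A - (w • A - x • A + y • A)).card
        = N ^ 3 * (N * (z • A - (w • A - x • A + y • A)).card) := by ring
      _ ≤ N ^ 3 * (P * (w • A - (x • A - y • A - b)).card) := Nat.mul_le_mul_left _ c1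
      _ = N ^ 2 * P * (N * (w • A - (x • A - y • A - b)).card) := by ring
      _ ≤ N ^ 2 * P * (P * (x • A - (y • A + b - b)).card) := Nat.mul_le_mul_left _ c2
      _ = N * P ^ 2 * (N * (x • A - (y • A + b - b)).card) := by ring
      _ ≤ N * P ^ 2 * (P * (y • A - (b - b - b)).card) := Nat.mul_le_mul_left _ c3
      _ = P ^ 3 * (N * (y • A - (b - b - b)).card) := by ring
      _ ≤ P ^ 3 * (P * Q) := Nat.mul_le_mul_left _ c4
      _ = P ^ 4 * Q := by ring
  -- Plünnecke–Ruzsa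
  have hPR : Q * A.card ^ 3 ≤ P ^ 4 := by
    have h := Finset.pluennecke_ruzsa_inequality_nsmul_sub_nsmul_add hAne A 2 2
    rw [two_nsmul] at h
    have e : (A + A) - (A + A) = A + A - A - A := by
      simp only [sub_eq_add_neg, neg_add, neg_neg]; ac_rfl
    rw [e] at h
    have hApos : (0 : ℚ≥0) < (A.card : ℚ≥0) := by
      exact_mod_cast hAne.card_pos
    have hAne' : (A.card : ℚ≥0) ≠ 0 := ne_of_gt hApos
    have hq : (Q : ℚ≥0) * (A.card : ℚ≥0) ^ 3 ≤ (P : ℚ≥0) ^ 4 := by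
      calc (Q : ℚ≥0) * (A.card : ℚ≥0) ^ 3
          ≤ (((P : ℚ≥0) / A.card) ^ (2 + 2) * A.card) * (A.card : ℚ≥0) ^ 3 := by
            apply mul_le_mul_left
            exact_mod_cast h
        _ = (P : ℚ≥0) ^ 4 := by
            rw [div_pow, div_mul_eq_mul_div, div_mul_eq_mul_div,
              div_eq_iff (pow_ne_zero _ hAne')]
            ring
    exact_mod_cast hq
  -- combine in ℕ
  have final : A₁.card ^ 2 * N ^ 4 * A.card ^ 3 ≤ 2 * P ^ 8 := by
    have s1 : A₁.card ^ 2 ≤ 2 * (z • A - (w • A - x • A + y • A)).card := by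
      calc A₁.card ^ 2 ≤ 2 * ((z - w) • A₁ + (x - y) • A₁).card := hGK
        _ ≤ 2 * ((z • A - w • A) + (x • A - y • A)).card :=
            Nat.mul_le_mul_left _ (Finset.card_le_card hcont)
        _ = 2 * (z • A - (w • A - x • A + y • A)).card := by rw [e0]
    calc A₁.card ^ 2 * N ^ 4 * A.card ^ 3
        ≤ (2 * (z • A - (w • A - x • A + y • A)).card) * N ^ 4 * A.card ^ 3 :=
          Nat.mul_le_mul_right _ (Nat.mul_le_mul_right _ s1)
      _ = 2 * (N ^ 4 * (z • A - (w • A - x • A + y • A)).card) * A.card ^ 3 := by ring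
      _ ≤ 2 * (P ^ 4 * Q) * A.card ^ 3 :=
          Nat.mul_le_mul_right _ (Nat.mul_le_mul_left _ main)
      _ = 2 * P ^ 4 * (Q * A.card ^ 3) := by ring
      _ ≤ 2 * P ^ 4 * P ^ 4 := Nat.mul_le_mul_left _ hPR
      _ = 2 * P ^ 8 := by ring
  have final' : ((A₁.card ^ 2 * N ^ 4 * A.card ^ 3 : ℕ) : ℝ) ≤ ((2 * P ^ 8 : ℕ) : ℝ) := by
    exact_mod_cast final
  push_cast at final'
  calc (A₁.card : ℝ) ^ 2 * (N : ℝ) ^ 4 * (A.card : ℝ) ^ 3 ≤ 2 * (P : ℝ) ^ 8 := final'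
    _ = 2 * ((A + A).card : ℝ) ^ 8 := by rw [hP]
end
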